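/- arXiv:1207.7336 — 5 statements merged into one kernel-verified Lean document; each statement's English description precedes it below -/
import Mathlib

section
/- Let r > 1 and 0 < δ₀ < 1/2. Set B = 5(1+δ₀)r² + 8(1/2−δ₀)(r+1) + 8(8/3)^r(1+δ₀), k = (B + √(B² − 160(1+δ₀)(1/2−δ₀)r²(r+1)))/(10r(r+1)), and k₂ = 8k(1+δ₀)/((r+1)(5kr − 8(1/2−δ₀))). Then k − r/(r+1) − k₂·(8/3)^r = δ₀·r/(r+1). -/
set_option maxHeartbeats 4000000 in
/-- The damping coefficient identity in the proof of Theorem 2. -/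
theorem stmt_3 (r δ₀ B k k₂ : ℝ) (hr : 1 < r) (hδ₀ : 0 < δ₀) (hδ₀' : δ₀ < 1/2)
    (hB : B = 5*(1+δ₀)*r^2 + 8*(1/2-δ₀)*(r+1) + 8*((8/3:ℝ)^r)*(1+δ₀))
    (hk : k = (B + Real.sqrt (B^2 - 160*(1+δ₀)*(1/2-δ₀)*r^2*(r+1))) / (10*r*(r+1)))
    (hk₂ : k₂ = 8*k*(1+δ₀) / ((r+1)*(5*k*r - 8*(1/2-δ₀)))) :
    k - r/(r+1) - k₂*((8/3:ℝ)^r) = δ₀*r/(r+1) := by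
  obtain ⟨P, hPeq, hP⟩ : ∃ P : ℝ, (8/3:ℝ)^r = P ∧ 0 < P :=
    ⟨_, rfl, Real.rpow_pos_of_pos (by norm_num) r⟩
  rw [hPeq] at hB ⊢
  have hr0 : (0:ℝ) < r := by linarith
  have hr1 : (0:ℝ) < r + 1 := by linarith
  have hδ : (0:ℝ) < 1/2 - δ₀ := by linarith
  have hDid : B^2 - 160*(1+δ₀)*(1/2-δ₀)*r^2*(r+1)
      = (5*(1+δ₀)*r^2 + 8*P*(1+δ₀) - 8*(1/2-δ₀)*(r+1))^2
        + 4*(8*(1/2-δ₀)*(r+1))*(8*P*(1+δ₀)) := by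
    rw [hB]; ring
  have hD0 : 0 ≤ B^2 - 160*(1+δ₀)*(1/2-δ₀)*r^2*(r+1) := by
    rw [hDid]; positivity
  obtain ⟨s, hseq, hs0, hs2⟩ : ∃ s : ℝ,
      Real.sqrt (B^2 - 160*(1+δ₀)*(1/2-δ₀)*r^2*(r+1)) = s ∧ 0 ≤ s ∧
      s^2 = B^2 - 160*(1+δ₀)*(1/2-δ₀)*r^2*(r+1) :=
    ⟨_, rfl, Real.sqrt_nonneg _, Real.sq_sqrt hD0⟩
  rw [hseq] at hk
  have hsgt : 8*(1/2-δ₀)*(r+1) - 5*(1+δ₀)*r^2 - 8*P*(1+δ₀) < s := by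
    nlinarith [hs2, hDid, sq_nonneg (s + (5*(1+δ₀)*r^2 + 8*P*(1+δ₀) - 8*(1/2-δ₀)*(r+1))),
      mul_pos (mul_pos (by positivity : (0:ℝ) < 4*(8*(1/2-δ₀)*(r+1))) hP) (by norm_num : (0:ℝ) < 8)]
  have hkden : (10*r*(r+1)) ≠ 0 := by positivity
  have hk' : k * (10*r*(r+1)) = B + s := by
    rw [hk]; field_simp
  have hsval : s = k*(10*r*(r+1)) - B := by linarith [hk']
  have hden : 0 < 5*k*r - 8*(1/2-δ₀) := by
    have h1 : 16*(1/2-δ₀)*(r+1) < B + s := by rw [hB]; linarith [hsgt]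
    have h2 : (5*k*r - 8*(1/2-δ₀)) * (2*(r+1)) = (B + s) - 16*(1/2-δ₀)*(r+1) := by
      linear_combination hk'
    nlinarith [h1, h2, hr1]
  have hquad20 : (5*r*(r+1)*k^2 - B*k + 8*(1+δ₀)*(1/2-δ₀)*r) * (20*r*(r+1)) = 0 := by
    linear_combination (-(k*(10*r*(r+1)) - B + s)) * hsval + hs2
  have hquad : 5*r*(r+1)*k^2 - B*k + 8*(1+δ₀)*(1/2-δ₀)*r = 0 := by
    have h20 : (20*r*(r+1)) ≠ 0 := by positivity
    exact (mul_eq_zero.mp hquad20).resolve_right h20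
  have key : (k*(r+1) - r - δ₀*r) * (5*k*r - 8*(1/2-δ₀)) = 8*k*(1+δ₀)*P := by
    linear_combination hquad + k*hB
  have hden' : (r+1)*(5*k*r - 8*(1/2-δ₀)) ≠ 0 := by positivity
  rw [hk₂]
  have e1 : 8*k*(1+δ₀) / ((r+1)*(5*k*r - 8*(1/2-δ₀))) * P
      = (k*(r+1) - r - δ₀*r)/(r+1) := by
    rw [div_mul_eq_mul_div, div_eq_div_iff hden' hr1.ne']
    linear_combination (-(r+1)) * key
  rw [e1]
  field_simp
  ring
end

section
/- Let r > 1 and 0 < δ₀ < 1/2. Set B = 5(1+δ₀)r² + 8(1/2−δ₀)(r+1) + 8(8/3)^r(1+δ₀), k = (B + √(B² − 160(1+δ₀)(1/2−δ₀)r²(r+1)))/(10r(r+1)), and k₂ = 8k(1+δ₀)/((r+1)(5kr − 8(1/2−δ₀))). Then for every real β with 0 < β + 1 ≤ (1/2 − δ₀)/k, one has k₂·(5r/8 − (β+1)) − 1/(r+1) ≥ δ₀/(r+1). -/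
set_option maxHeartbeats 1000000


/-- Lower bound on the coefficient of the weighted potential-energy term in
Lemma 4.2 of the paper. -/
theorem stmt_5 (r δ₀ B k k₂ : ℝ) (hr : 1 < r) (hδ₀ : 0 < δ₀) (hδ₀' : δ₀ < 1/2)
    (hB : B = 5*(1+δ₀)*r^2 + 8*(1/2-δ₀)*(r+1) + 8*((8/3:ℝ)^r)*(1+δ₀))
    (hk : k = (B + Real.sqrt (B^2 - 160*(1+δ₀)*(1/2-δ₀)*r^2*(r+1))) / (10*r*(r+1)))
    (hk₂ : k₂ = 8*k*(1+δ₀) / ((r+1)*(5*k*r - 8*(1/2-δ₀)))) :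
    ∀ β : ℝ, 0 < β + 1 → β + 1 ≤ (1/2 - δ₀)/k →
      k₂*(5*r/8 - (β+1)) - 1/(r+1) ≥ δ₀/(r+1) := by
  intro β hβ hβ'
  set s := Real.sqrt (B^2 - 160*(1+δ₀)*(1/2-δ₀)*r^2*(r+1)) with hs
  have hr1 : (0:ℝ) < r + 1 := by linarith
  have hc : (0:ℝ) < 1/2 - δ₀ := by linarith
  have hM : (8/3:ℝ) ≤ (8/3:ℝ)^r := by
    calc (8/3:ℝ) = (8/3:ℝ)^(1:ℝ) := (Real.rpow_one _).symm
    _ ≤ (8/3:ℝ)^r := Real.rpow_le_rpow_of_exponent_le (by norm_num) hr.le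
  have hssq : 0 ≤ s := Real.sqrt_nonneg _
  have hBbig : 16*(1/2-δ₀)*(r+1) < B := by
    rw [hB]; nlinarith [hM]
  have hBpos : 0 < B := by nlinarith
  have hden : (0:ℝ) < 10*r*(r+1) := by nlinarith
  have hkpos : 0 < k := by
    rw [hk]; exact div_pos (by linarith) hden
  have hkeq : k * (10*r*(r+1)) = B + s := by
    rw [hk]; field_simp
  have h5kr : 8*(1/2-δ₀) < 5*k*r := by
    nlinarith [hkeq, hBbig, hssq, hr1]
  have hk₂pos : 0 < k₂ := by
    rw [hk₂]
    apply div_pos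
    · nlinarith
    · apply mul_pos hr1 (by linarith)
  have hne1 : r + 1 ≠ 0 := ne_of_gt hr1
  have hne2 : k ≠ 0 := ne_of_gt hkpos
  have hne3 : 5*k*r - 8*(1/2-δ₀) ≠ 0 := ne_of_gt (by linarith)
  have hT : 0 < 5*k*r - 8*(1/2-δ₀) := by linarith
  have heq : k₂*(5*r/8 - (1/2-δ₀)/k) = (1+δ₀)/(r+1) := by
    rw [hk₂, div_mul_eq_mul_div, div_eq_div_iff (mul_pos hr1 hT).ne' hne1]
    field_simp
  have step : k₂*(5*r/8 - (β+1)) ≥ k₂*(5*r/8 - (1/2-δ₀)/k) := by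
    apply mul_le_mul_of_nonneg_left (by linarith) hk₂pos.le
  have hsplit : (1+δ₀)/(r+1) = 1/(r+1) + δ₀/(r+1) := by ring
  linarith [step, heq, hsplit]
end

section
/- Let β ∈ ℝ and b > 1 with log b ≥ 3|β| + 2, and define f(s) = (log(b+s))^β/(b+s) for s ≥ 0. Then for every s ≥ 0 the second derivative of f at s satisfies f''(s) ≤ 4·(log(b+s))^β/(b+s)³. -/
/-- Upper bound for the second derivative of `f(s) = (log (b+s))^β / (b+s)`. -/
theorem stmt_8 (β b : ℝ) (hb : 1 < b) (hlogb : 3 * |β| + 2 ≤ Real.log b) :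
    ∀ s : ℝ, 0 ≤ s →
      deriv (deriv (fun s : ℝ => (Real.log (b + s)) ^ β / (b + s))) s
        ≤ 4 * (Real.log (b + s)) ^ β / (b + s) ^ 3 := by
  intro s hs
  set g : ℝ → ℝ := fun t =>
    (β * Real.log (b + t) ^ (β - 1) - Real.log (b + t) ^ β) / (b + t) ^ 2 with hgdef
  have key : ∀ t : ℝ, 1 - b < t →
      HasDerivAt (fun t : ℝ => Real.log (b + t) ^ β / (b + t)) (g t) t := by
    intro t ht
    have hx : (1 : ℝ) < b + t := by linarith
    have hx0 : b + t ≠ 0 := by linarith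
    have hL0 : 0 < Real.log (b + t) := Real.log_pos hx
    have h1 : HasDerivAt (fun t : ℝ => b + t) 1 t := (hasDerivAt_id t).const_add b
    have h2 : HasDerivAt (fun t : ℝ => Real.log (b + t)) ((b + t)⁻¹ * 1) t :=
      (Real.hasDerivAt_log hx0).comp t h1
    have h3 : HasDerivAt (fun t : ℝ => Real.log (b + t) ^ β)
        (β * Real.log (b + t) ^ (β - 1) * ((b + t)⁻¹ * 1)) t :=
      by have h := (Real.hasDerivAt_rpow_const (p := β) (Or.inl hL0.ne')).comp t h2; exact h
    have h4 := h3.div h1 hx0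
    have hnum : β * Real.log (b + t) ^ (β - 1) * ((b + t)⁻¹ * 1) * (b + t) -
        Real.log (b + t) ^ β * 1 =
        β * Real.log (b + t) ^ (β - 1) - Real.log (b + t) ^ β := by
      field_simp
    rw [hnum] at h4
    exact h4
  have hsopen : s ∈ {t : ℝ | 1 - b < t} := by simp; linarith
  have hopen : IsOpen {t : ℝ | 1 - b < t} := isOpen_lt continuous_const continuous_id
  have hev : deriv (fun t : ℝ => Real.log (b + t) ^ β / (b + t)) =ᶠ[nhds s] g := by
    filter_upwards [hopen.mem_nhds hsopen] with t ht
    exact (key t ht).deriv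
  rw [hev.deriv_eq]
  -- now compute deriv g s
  have hx : (1 : ℝ) < b + s := by linarith
  have hx0 : b + s ≠ 0 := by linarith
  have hxpos : (0 : ℝ) < b + s := by linarith
  have hL0 : 0 < Real.log (b + s) := Real.log_pos hx
  have h1 : HasDerivAt (fun t : ℝ => b + t) 1 s := (hasDerivAt_id s).const_add b
  have h2 : HasDerivAt (fun t : ℝ => Real.log (b + t)) ((b + s)⁻¹ * 1) s :=
    (Real.hasDerivAt_log hx0).comp s h1
  have hpow0 : HasDerivAt (fun t : ℝ => Real.log (b + t) ^ β)
      (β * Real.log (b + s) ^ (β - 1) * ((b + s)⁻¹ * 1)) s :=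
    by have h := (Real.hasDerivAt_rpow_const (p := β) (Or.inl hL0.ne')).comp s h2; exact h
  have hpow1 : HasDerivAt (fun t : ℝ => Real.log (b + t) ^ (β - 1))
      ((β - 1) * Real.log (b + s) ^ (β - 1 - 1) * ((b + s)⁻¹ * 1)) s :=
    by have h := (Real.hasDerivAt_rpow_const (p := β - 1) (Or.inl hL0.ne')).comp s h2; exact h
  have hN : HasDerivAt (fun t : ℝ => β * Real.log (b + t) ^ (β - 1) - Real.log (b + t) ^ β)
      (β * ((β - 1) * Real.log (b + s) ^ (β - 1 - 1) * ((b + s)⁻¹ * 1)) -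
        β * Real.log (b + s) ^ (β - 1) * ((b + s)⁻¹ * 1)) s :=
    (hpow1.const_mul β).sub hpow0
  have hD : HasDerivAt (fun t : ℝ => (b + t) ^ 2) ((2 : ℕ) * (b + s) ^ 1 * 1) s := h1.pow 2
  have hg' := hN.div hD (pow_ne_zero 2 hx0)
  rw [show deriv g s = _ from hg'.deriv]
  -- rewrite rpow powers
  set L := Real.log (b + s) with hLdef
  set x := b + s with hxdef
  have hLlog : 3 * |β| + 2 ≤ L :=
    le_trans hlogb (Real.log_le_log (by linarith) (by linarith))
  have hL2 : (2 : ℝ) ≤ L := by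
    have habs : (0 : ℝ) ≤ |β| := abs_nonneg β
    linarith
  have e1 : L ^ (β - 1) = L ^ β / L := by
    rw [Real.rpow_sub hL0, Real.rpow_one]
  have e2 : L ^ (β - 1 - 1) = L ^ β / L ^ 2 := by
    rw [show β - 1 - 1 = β - 2 by ring, Real.rpow_sub hL0, Real.rpow_two]
  rw [e1, e2]
  have hP : 0 < L ^ β := Real.rpow_pos_of_pos hL0 β
  have hLne : L ≠ 0 := hL0.ne'
  have hsimp : (β * ((β - 1) * (L ^ β / L ^ 2) * (x⁻¹ * 1)) - β * (L ^ β / L) * (x⁻¹ * 1)) * x ^ 2 -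
        (β * (L ^ β / L) - L ^ β) * ((2 : ℕ) * x ^ 1 * 1) =
      L ^ β * (β * (β - 1) - 3 * β * L + 2 * L ^ 2) * x / L ^ 2 := by
    field_simp
    ring
  rw [hsimp]
  have hC : β * (β - 1) - 3 * β * L + 2 * L ^ 2 ≤ 4 * L ^ 2 := by
    have ha : 3 * |β| ≤ L - 2 := by linarith
    have habs : (0 : ℝ) ≤ |β| := abs_nonneg β
    nlinarith [sq_abs β, le_abs_self β, neg_abs_le β, habs,
      mul_nonneg (show (0:ℝ) ≤ L - 2 - 3 * |β| by linarith) (show (0:ℝ) ≤ L by linarith),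
      mul_nonneg (show (0:ℝ) ≤ L - |β| by linarith) (show (0:ℝ) ≤ L + |β| by linarith)]
  have hrhs : 4 * L ^ β / x ^ 3 = L ^ β * (4 * L ^ 2) * x / L ^ 2 / (x ^ 2) ^ 2 := by
    field_simp
  rw [hrhs]
  gcongr
end

section
/- Let d ≥ 1 be a natural number, let f : ℝ → ℝ be twice continuously differentiable, and let t ∈ ℝ. Define F : EuclideanSpace ℝ (Fin d) → ℝ by F(x) = f(√(1+‖x‖²) + t). Then for every x, writing q = √(1+‖x‖²), the Laplacian of F at x equals f''(q+t)·(‖x‖²/q²) + f'(q+t)·(d/q − ‖x‖²/q³). -/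
/-- The Laplacian (sum of second partial derivatives with respect to the
standard orthonormal basis) of `F(x) = f(√(1+‖x‖²) + t)` on `ℝ^d`. -/
theorem stmt_12 (d : ℕ) (hd : 1 ≤ d) (f : ℝ → ℝ) (hf : ContDiff ℝ 2 f) (t : ℝ)
    (F : EuclideanSpace ℝ (Fin d) → ℝ)
    (hF : ∀ x, F x = f (Real.sqrt (1 + ‖x‖ ^ 2) + t)) :
    ∀ x : EuclideanSpace ℝ (Fin d),
      (∑ i : Fin d,
        fderiv ℝ (fun y => fderiv ℝ F y (EuclideanSpace.single i (1:ℝ))) x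
          (EuclideanSpace.single i (1:ℝ)))
      = deriv (deriv f) (Real.sqrt (1 + ‖x‖ ^ 2) + t)
          * (‖x‖ ^ 2 / (Real.sqrt (1 + ‖x‖ ^ 2)) ^ 2)
        + deriv f (Real.sqrt (1 + ‖x‖ ^ 2) + t)
          * ((d : ℝ) / Real.sqrt (1 + ‖x‖ ^ 2)
              - ‖x‖ ^ 2 / (Real.sqrt (1 + ‖x‖ ^ 2)) ^ 3) := by
  intro x
  set q : EuclideanSpace ℝ (Fin d) → ℝ := fun y => Real.sqrt (1 + ‖y‖ ^ 2)
    with hqdef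
  have hqpos : ∀ y : EuclideanSpace ℝ (Fin d), 0 < q y := fun y =>
    Real.sqrt_pos.2 (by positivity)
  have hqne : ∀ y : EuclideanSpace ℝ (Fin d), q y ≠ 0 := fun y =>
    ne_of_gt (hqpos y)
  have hinner : ∀ (y : EuclideanSpace ℝ (Fin d)) (i : Fin d),
      (inner ℝ y (EuclideanSpace.single i (1:ℝ)) : ℝ) = y i := by
    intro y i
    rw [EuclideanSpace.inner_single_right]
    simp
  -- derivative of q
  have hq : ∀ y : EuclideanSpace ℝ (Fin d),
      HasFDerivAt q ((q y)⁻¹ • innerSL ℝ y) y := by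
    intro y
    have h1 : HasFDerivAt (fun z : EuclideanSpace ℝ (Fin d) => 1 + ‖z‖ ^ 2)
        ((2:ℝ) • innerSL ℝ y) y := by
      have := ((hasFDerivAt_id y).norm_sq).const_add (1:ℝ)
      simpa [← Nat.cast_smul_eq_nsmul ℝ] using this
    have h2 := h1.sqrt (by positivity)
    rw [smul_smul] at h2
    have hs : (1 / (2 * Real.sqrt (1 + ‖y‖ ^ 2)) * 2) = (q y)⁻¹ := by
      rw [hqdef]
      field_simp
    rwa [hs] at h2
  -- differentiability of f and its derivative
  have hf1 : ContDiff ℝ (1 + 1 : WithTop ℕ∞) f := by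
    convert hf using 2
    norm_num
  have hdf : ContDiff ℝ 1 (deriv f) := (contDiff_succ_iff_deriv.mp hf1).2.2
  have hfdiff : Differentiable ℝ f := (contDiff_succ_iff_deriv.mp hf1).1
  have hdfdiff : Differentiable ℝ (deriv f) := hdf.differentiable (by norm_num)
  -- first derivative of F
  have hFD : ∀ y : EuclideanSpace ℝ (Fin d),
      HasFDerivAt F ((deriv f (q y + t) * (q y)⁻¹) • innerSL ℝ y) y := by
    intro y
    have hdF : HasDerivAt f (deriv f (q y + t)) (q y + t) :=
      (hfdiff (q y + t)).hasDerivAt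
    have h := hdF.comp_hasFDerivAt y ((hq y).add_const t)
    have hFe : F = fun z => f (q z + t) := funext hF
    rw [hFe]
    simp only [smul_smul] at h
    exact h
  have hfd : ∀ (y : EuclideanSpace ℝ (Fin d)) (i : Fin d),
      fderiv ℝ F y (EuclideanSpace.single i (1:ℝ))
        = deriv f (q y + t) * ((q y)⁻¹ * y i) := by
    intro y i
    rw [(hFD y).fderiv]
    simp [hinner, mul_assoc]
  -- per-coordinate second derivative
  have key : ∀ i : Fin d,
      fderiv ℝ (fun y => fderiv ℝ F y (EuclideanSpace.single i (1:ℝ))) x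
          (EuclideanSpace.single i (1:ℝ))
        = deriv (deriv f) (q x + t) * ((q x)⁻¹ * x i) * ((q x)⁻¹ * x i)
          + deriv f (q x + t)
            * ((q x)⁻¹ - x i * x i * ((q x)⁻¹ * (q x)⁻¹ * (q x)⁻¹)) := by
    intro i
    have hfun : (fun y => fderiv ℝ F y (EuclideanSpace.single i (1:ℝ)))
        = fun y => deriv f (q y + t) * ((q y)⁻¹ * y i) := by
      funext y; exact hfd y i
    rw [hfun]
    have hdf2 : HasDerivAt (deriv f) (deriv (deriv f) (q x + t)) (q x + t) :=
      (hdfdiff (q x + t)).hasDerivAt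
    have hA : HasFDerivAt (fun y => deriv f (q y + t))
        (deriv (deriv f) (q x + t) • ((q x)⁻¹ • innerSL ℝ x)) x :=
      by exact hdf2.comp_hasFDerivAt x ((hq x).add_const t)
    have hinv : HasFDerivAt (fun y : EuclideanSpace ℝ (Fin d) => (q y)⁻¹)
        ((-(q x ^ 2)⁻¹) • ((q x)⁻¹ • innerSL ℝ x)) x :=
      (hasDerivAt_inv (hqne x)).comp_hasFDerivAt x (hq x)
    have hi : HasFDerivAt (fun y : EuclideanSpace ℝ (Fin d) => y i)
        (EuclideanSpace.proj (𝕜 := ℝ) i) x :=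
      (EuclideanSpace.proj (𝕜 := ℝ) i).hasFDerivAt
    have hB := hinv.mul hi
    have hC : HasFDerivAt (fun y => deriv f (q y + t) * ((q y)⁻¹ * y i)) _ x :=
      hA.mul hB
    rw [hC.fderiv]
    simp [hinner, EuclideanSpace.proj, EuclideanSpace.single_apply]
    field_simp
    ring
  rw [Finset.sum_congr rfl (fun i _ => key i)]
  have hns : ‖x‖ ^ 2 = ∑ i, x i * x i := by
    rw [← real_inner_self_eq_norm_sq]
    rw [PiLp.inner_apply]
    simp [sq]
  rw [Finset.sum_add_distrib]
  have e1 : ∑ i : Fin d,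
      deriv (deriv f) (q x + t) * ((q x)⁻¹ * x i) * ((q x)⁻¹ * x i)
      = deriv (deriv f) (q x + t) * ((q x)⁻¹ * (q x)⁻¹) * ‖x‖ ^ 2 := by
    rw [hns, Finset.mul_sum]
    exact Finset.sum_congr rfl fun i _ => by ring
  have e2 : ∑ i : Fin d,
      deriv f (q x + t)
        * ((q x)⁻¹ - x i * x i * ((q x)⁻¹ * (q x)⁻¹ * (q x)⁻¹))
      = deriv f (q x + t)
        * ((d : ℝ) * (q x)⁻¹ - ‖x‖ ^ 2 * ((q x)⁻¹ * (q x)⁻¹ * (q x)⁻¹)) := by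
    rw [hns, ← Finset.mul_sum]
    congr 1
    rw [Finset.sum_sub_distrib, Finset.sum_const, Finset.card_univ,
      Fintype.card_fin, ← Finset.sum_mul]
    simp [nsmul_eq_mul]
  rw [e1, e2]
  have hqx : Real.sqrt (1 + ‖x‖ ^ 2) = q x := rfl
  rw [hqx]
  have h := hqne x
  field_simp
end

section
/- Let d ≥ 1 be a natural number, let f : ℝ → ℝ be twice continuously differentiable, and let t ∈ ℝ. Define F : EuclideanSpace ℝ (Fin d) → ℝ by F(x) = f(√(1+‖x‖²) + t). If x is such that, with q = √(1+‖x‖²), one has f'(q+t) ≤ 0 and f''(q+t) ≥ 0, then the Laplacian of F at x is at most f''(q+t). -/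
open Real

noncomputable section

lemma sqq_pos {d : ℕ} (x : EuclideanSpace ℝ (Fin d)) : 0 < Real.sqrt (1 + ‖x‖^2) :=
  Real.sqrt_pos.2 (by positivity)

lemma hq_deriv {d : ℕ} (x : EuclideanSpace ℝ (Fin d)) :
    HasFDerivAt (fun y : EuclideanSpace ℝ (Fin d) => Real.sqrt (1 + ‖y‖^2))
      ((Real.sqrt (1 + ‖x‖^2))⁻¹ • (innerSL ℝ x)) x := by
  have h1 : HasFDerivAt (fun y : EuclideanSpace ℝ (Fin d) => 1 + ‖y‖^2)
      (2 • (innerSL ℝ x)) x := by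
    have h0 := (hasFDerivAt_const (1:ℝ) x).add (hasFDerivAt_id x).norm_sq
    simp only [zero_add] at h0
    exact h0
  have h2 := h1.sqrt (by positivity)
  refine h2.congr_fderiv ?_
  ext v
  have := sqq_pos x
  simp only [ContinuousLinearMap.smul_apply]
  rw [smul_eq_mul, smul_eq_mul]
  field_simp
  ring

lemma comp_deriv {d : ℕ} (φ : ℝ → ℝ) (t : ℝ) (x : EuclideanSpace ℝ (Fin d))
    (hφ : DifferentiableAt ℝ φ (Real.sqrt (1 + ‖x‖^2) + t)) :
    HasFDerivAt (fun y : EuclideanSpace ℝ (Fin d) => φ (Real.sqrt (1 + ‖y‖^2) + t))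
      (deriv φ (Real.sqrt (1 + ‖x‖^2) + t) •
        ((Real.sqrt (1 + ‖x‖^2))⁻¹ • (innerSL ℝ x))) x :=
  hφ.hasDerivAt.comp_hasFDerivAt x ((hq_deriv x).add_const t)

lemma normsq_eq {d : ℕ} (x : EuclideanSpace ℝ (Fin d)) : ∑ i, x i ^ 2 = ‖x‖ ^ 2 := by
  rw [EuclideanSpace.norm_eq, Real.sq_sqrt (by positivity)]
  simp [Real.norm_eq_abs, sq_abs]

/-- Upper bound for the Laplacian (sum of second partial derivatives with
respect to the standard orthonormal basis) of `F(x) = f(√(1+‖x‖²) + t)`. -/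
theorem stmt_13 (d : ℕ) (hd : 1 ≤ d) (f : ℝ → ℝ) (hf : ContDiff ℝ 2 f) (t : ℝ)
    (F : EuclideanSpace ℝ (Fin d) → ℝ)
    (hF : ∀ x, F x = f (Real.sqrt (1 + ‖x‖ ^ 2) + t)) :
    ∀ x : EuclideanSpace ℝ (Fin d),
      deriv f (Real.sqrt (1 + ‖x‖ ^ 2) + t) ≤ 0 →
      0 ≤ deriv (deriv f) (Real.sqrt (1 + ‖x‖ ^ 2) + t) →
      (∑ i : Fin d,
        fderiv ℝ (fun y => fderiv ℝ F y (EuclideanSpace.single i (1:ℝ))) x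
          (EuclideanSpace.single i (1:ℝ)))
      ≤ deriv (deriv f) (Real.sqrt (1 + ‖x‖ ^ 2) + t) := by
  have hFeq : F = fun y => f (Real.sqrt (1 + ‖y‖ ^ 2) + t) := funext hF
  subst hFeq
  have hdf : ContDiff ℝ 1 (deriv f) := ((contDiff_succ_iff_deriv (n := 1)).mp (by exact_mod_cast hf)).2.2
  have hfd : Differentiable ℝ f := hf.differentiable (by norm_num)
  intro x hf1 hf2
  set q : ℝ := Real.sqrt (1 + ‖x‖ ^ 2) with hqdef
  have hq0 : 0 < q := sqq_pos x
  have hq2 : q ^ 2 = 1 + ‖x‖ ^ 2 := Real.sq_sqrt (by positivity)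
  set s : ℝ := q + t with hsdef
  set c1 : ℝ := deriv (deriv f) s with hc1
  set c2 : ℝ := deriv f s with hc2
  -- first derivative formula
  have key : ∀ i : Fin d,
      (fun y : EuclideanSpace ℝ (Fin d) =>
        fderiv ℝ (fun y => f (Real.sqrt (1 + ‖y‖ ^ 2) + t)) y (EuclideanSpace.single i (1:ℝ)))
      = fun y => deriv f (Real.sqrt (1 + ‖y‖ ^ 2) + t) *
          ((Real.sqrt (1 + ‖y‖ ^ 2))⁻¹ * y i) := by
    intro i
    funext y
    rw [(comp_deriv f t y (hfd _)).fderiv]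
    simp [EuclideanSpace.inner_single_right]
  -- second derivative at x in direction i
  have term : ∀ i : Fin d,
      fderiv ℝ (fun y : EuclideanSpace ℝ (Fin d) =>
        deriv f (Real.sqrt (1 + ‖y‖ ^ 2) + t) * ((Real.sqrt (1 + ‖y‖ ^ 2))⁻¹ * y i)) x
        (EuclideanSpace.single i (1:ℝ))
      = c1 * (q⁻¹ * x i)^2 + c2 * (q⁻¹ - q⁻¹^3 * (x i)^2) := by
    intro i
    have hinv : HasFDerivAt (fun y : EuclideanSpace ℝ (Fin d) => (Real.sqrt (1 + ‖y‖ ^ 2))⁻¹)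
        ((-(q ^ 2)⁻¹) • ((q)⁻¹ • (innerSL ℝ x))) x :=
      (hasDerivAt_inv (ne_of_gt hq0)).comp_hasFDerivAt x (hq_deriv x)
    have hproj : HasFDerivAt (fun y : EuclideanSpace ℝ (Fin d) => y i)
        (EuclideanSpace.proj i : EuclideanSpace ℝ (Fin d) →L[ℝ] ℝ) x :=
      (EuclideanSpace.proj i : EuclideanSpace ℝ (Fin d) →L[ℝ] ℝ).hasFDerivAt
    have hA := comp_deriv (deriv f) t x ((hdf.differentiable (by norm_num)) _)
    have hG := hA.fun_mul (hinv.fun_mul hproj)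
    rw [hG.fderiv]
    have e1 : (innerSL ℝ x) (EuclideanSpace.single i (1:ℝ)) = x i := by
      simp [EuclideanSpace.inner_single_right]
    have e2 : (EuclideanSpace.proj i : EuclideanSpace ℝ (Fin d) →L[ℝ] ℝ)
        (EuclideanSpace.single i (1:ℝ)) = 1 := by simp
    simp only [ContinuousLinearMap.add_apply, ContinuousLinearMap.smul_apply,
      ContinuousLinearMap.neg_apply, smul_eq_mul, e1, e2]
    rw [← hqdef, ← hsdef, ← hc1, ← hc2]
    ring
  simp only [key, term]
  -- sum the terms
  have hsum : ∑ _i : Fin d, (c2 * q⁻¹) = (d : ℝ) * (c2 * q⁻¹) := by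
    simp [Finset.sum_const, mul_comm]
  have hS : (∑ i : Fin d, (c1 * (q⁻¹ * x i)^2 + c2 * (q⁻¹ - q⁻¹^3 * (x i)^2)))
      = (c1 * q⁻¹^2 - c2 * q⁻¹^3) * ‖x‖^2 + (d : ℝ) * (c2 * q⁻¹) := by
    rw [← normsq_eq x, ← hsum, Finset.mul_sum, ← Finset.sum_add_distrib]
    exact Finset.sum_congr rfl fun i _ => by ring
  rw [hS]
  -- final inequality
  have hA0 : (0:ℝ) ≤ ‖x‖^2 := by positivity
  have hqinv : q * q⁻¹ = 1 := mul_inv_cancel₀ (ne_of_gt hq0)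
  have hd1 : (1:ℝ) ≤ (d:ℝ) := by exact_mod_cast hd
  have hqi0 : 0 < q⁻¹ := inv_pos.2 hq0
  have hu2A : q⁻¹^2 * ‖x‖^2 = 1 - q⁻¹^2 := by
    have : q⁻¹^2 * q^2 = 1 := by field_simp
    nlinarith [this, hq2]
  have hu3A : q⁻¹^3 * ‖x‖^2 = q⁻¹ - q⁻¹^3 := by
    have : q⁻¹^3 * ‖x‖^2 = q⁻¹ * (q⁻¹^2 * ‖x‖^2) := by ring
    rw [this, hu2A]
    field_simp
  have e1 : c1 * (q⁻¹^2 * ‖x‖^2) = c1 * (1 - q⁻¹^2) := by rw [hu2A]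
  have e2 : c2 * (q⁻¹^3 * ‖x‖^2) = c2 * (q⁻¹ - q⁻¹^3) := by rw [hu3A]
  have h3 : 0 ≤ c1 * q⁻¹^2 := mul_nonneg hf2 (sq_nonneg _)
  have h4 : c2 * q⁻¹ ≤ 0 := mul_nonpos_of_nonpos_of_nonneg hf1 hqi0.le
  have h5 : c2 * q⁻¹^3 ≤ 0 := mul_nonpos_of_nonpos_of_nonneg hf1 (pow_pos hqi0 3).le
  have h6 : ((d:ℝ) - 1) * (c2 * q⁻¹) ≤ 0 :=
    mul_nonpos_of_nonneg_of_nonpos (by linarith) h4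
  nlinarith [e1, e2, h3, h4, h5, h6]
end
end
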